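/- The complement of K₃,₃ minus an edge (co-(K₃,₃−e)) is not module-composed. -/

import Mathlib

open scoped Classical

/-- `M` is a module (homogeneous set) of `G`: every two vertices of `M`
have the same neighbours outside `M`. -/
def SimpleGraph.IsModule {V : Type*} (G : SimpleGraph V) (M : Set V) : Prop :=
  ∀ v₁ ∈ M, ∀ v₂ ∈ M, ∀ w ∉ M, (G.Adj v₁ w ↔ G.Adj v₂ w)

/-- `G` is module-composed: there is a linear ordering `v₀, …, v_{n-1}` of the
vertices such that for every `i ≥ 1` the neighbourhood of `vᵢ` inside the
induced subgraph on `{v₀, …, v_{i-1}}` is a module of that induced subgraph. -/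
def SimpleGraph.ModuleComposed {V : Type*} [Fintype V] (G : SimpleGraph V) : Prop :=
  ∃ e : Fin (Fintype.card V) ≃ V,
    ∀ i : Fin (Fintype.card V), 0 < (i : ℕ) →
      (G.induce {v | ∃ j, j < i ∧ e j = v}).IsModule
        {w : {v | ∃ j, j < i ∧ e j = v} | G.Adj (e i) ↑w}


/-- `K₃,₃ − e`: the complete bipartite graph with parts `{0,1,2}` and
`{3,4,5}`, minus the edge `{0,3}`. -/
def K33MinusEdge : SimpleGraph (Fin 6) :=
  SimpleGraph.fromRel (fun a b =>
    (a : ℕ) < 3 ∧ 3 ≤ (b : ℕ) ∧ ¬((a : ℕ) = 0 ∧ (b : ℕ) = 3))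

def adjB (x y : Fin 6) : Bool :=
  !(x.val == y.val) &&
    ((x.val < 3 && y.val < 3) || (3 ≤ x.val && 3 ≤ y.val) ||
     (x.val == 0 && y.val == 3) || (x.val == 3 && y.val == 0))

instance : DecidableRel K33MinusEdge.Adj := fun a b =>
  inferInstanceAs (Decidable (a ≠ b ∧ _))

theorem adjB_iff : ∀ x y : Fin 6, K33MinusEdgeᶜ.Adj x y ↔ adjB x y = true := by decide

def viol (p : List (Fin 6)) (v : Fin 6) : Bool :=
  p.any fun a => adjB v a && (p.any fun b => adjB v b &&
    (p.any fun c => !adjB v c && adjB a c && !adjB b c))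

def check : List (Fin 6) → List (Fin 6) → Bool
  | _, [] => false
  | p, v :: r => viol p v || check (p ++ [v]) r

set_option maxHeartbeats 16000000 in
set_option maxRecDepth 10000 in
theorem key6 : ∀ x0 x1 x2 x3 x4 x5 : Fin 6,
    ([x0,x1,x2,x3,x4,x5] : List (Fin 6)).Nodup →
    check [] [x0,x1,x2,x3,x4,x5] = true := by decide

theorem viol_spec {p : List (Fin 6)} {v : Fin 6} (h : viol p v = true) :
    ∃ a ∈ p, ∃ b ∈ p, ∃ c ∈ p, adjB v a = true ∧ adjB v b = true ∧
      adjB v c = false ∧ adjB a c = true ∧ adjB b c = false := by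
  simp only [viol, List.any_eq_true, Bool.and_eq_true, Bool.not_eq_true'] at h
  obtain ⟨a, ha, hva, b, hb, hvb, c, hc, ⟨hvc, hac⟩, hbc⟩ := h
  exact ⟨a, ha, b, hb, c, hc, hva, hvb, hvc, hac, hbc⟩

theorem check_spec : ∀ (l p : List (Fin 6)), check p l = true →
    ∃ q v r, l = q ++ v :: r ∧ viol (p ++ q) v = true := by
  intro l
  induction l with
  | nil => intro p h; simp [check] at h
  | cons v r ih =>
    intro p h
    rw [check, Bool.or_eq_true] at h
    rcases h with h | h
    · exact ⟨[], v, r, by simp, by simpa using h⟩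
    · obtain ⟨q, w, s, hr, hv⟩ := ih (p ++ [v]) h
      exact ⟨v :: q, w, s, by simp [hr], by simpa [List.append_assoc] using hv⟩

theorem getL (f : Fin 6 → Fin 6) (j : ℕ) (hj : j < 6) :
    ([f 0, f 1, f 2, f 3, f 4, f 5] : List (Fin 6))[j]'(by simpa using hj) = f ⟨j, hj⟩ := by
  interval_cases j <;> rfl

theorem key (f : Fin 6 → Fin 6) (hf : Function.Injective f) :
    ∃ i a b c : Fin 6, a < i ∧ b < i ∧ c < i ∧
      adjB (f i) (f a) = true ∧ adjB (f i) (f b) = true ∧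
      adjB (f i) (f c) = false ∧ adjB (f a) (f c) = true ∧
      adjB (f b) (f c) = false := by
  have hofn : List.ofFn f = [f 0, f 1, f 2, f 3, f 4, f 5] := by
    simp [List.ofFn_succ]
  have hnd : ([f 0, f 1, f 2, f 3, f 4, f 5] : List (Fin 6)).Nodup := by
    rw [← hofn]; exact List.nodup_ofFn.mpr hf
  have hch : check [] [f 0, f 1, f 2, f 3, f 4, f 5] = true := key6 _ _ _ _ _ _ hnd
  obtain ⟨q, v, r, hlq, hv⟩ := check_spec _ [] hch
  rw [List.nil_append] at hv
  have hlen : q.length + (r.length + 1) = 6 := by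
    have := congrArg List.length hlq
    simpa [Nat.add_comm, Nat.add_left_comm] using this.symm
  have hqlt : q.length < 6 := by omega
  have hvget : v = f ⟨q.length, hqlt⟩ := by
    have h1 : ([f 0, f 1, f 2, f 3, f 4, f 5] : List (Fin 6))[q.length]'(by simpa using hqlt)
        = v := by
      simp only [hlq]
      rw [List.getElem_append_right (le_refl q.length)]
      simp
    rw [← getL f q.length hqlt, h1]
  obtain ⟨a, ha, b, hb, c, hc, h1, h2, h3, h4, h5⟩ := viol_spec hv
  have idx : ∀ x ∈ q, ∃ j : Fin 6, (j : ℕ) < q.length ∧ f j = x := by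
    intro x hx
    obtain ⟨n, hn, hxn⟩ := List.mem_iff_getElem.mp hx
    have hn6 : n < 6 := by omega
    refine ⟨⟨n, hn6⟩, hn, ?_⟩
    have hg : ([f 0, f 1, f 2, f 3, f 4, f 5] : List (Fin 6))[n]'(by simpa using hn6) = x := by
      simp only [hlq]
      rw [List.getElem_append_left hn]
      exact hxn
    rw [← getL f n hn6, hg]
  obtain ⟨ja, hja, hfa⟩ := idx a ha
  obtain ⟨jb, hjb, hfb⟩ := idx b hb
  obtain ⟨jc, hjc, hfc⟩ := idx c hc
  rw [hvget] at h1 h2 h3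
  rw [← hfa] at h1 h4
  rw [← hfb] at h2 h5
  rw [← hfc] at h3 h4 h5
  exact ⟨⟨q.length, hqlt⟩, ja, jb, jc, hja, hjb, hjc, h1, h2, h3, h4, h5⟩

/-- The complement of `K₃,₃ − e` is not module-composed. -/
theorem co_K33MinusEdge_not_moduleComposed : ¬ K33MinusEdgeᶜ.ModuleComposed := by
  rintro ⟨e, h⟩
  have hc : Fintype.card (Fin 6) = 6 := Fintype.card_fin 6
  set f : Fin 6 → Fin 6 := fun j => e (Fin.cast hc.symm j) with hfdef
  have hf : Function.Injective f := by
    intro x y hxy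
    exact Fin.ext (congrArg Fin.val (e.injective hxy))
  obtain ⟨i, a, b, c, hai, hbi, hci, H1, H2, H3, H4, H5⟩ := key f hf
  set i' : Fin (Fintype.card (Fin 6)) := Fin.cast hc.symm i with hi'
  have hipos : 0 < (i' : ℕ) := lt_of_le_of_lt (Nat.zero_le _) hai
  have H := h i' hipos
  have mS : ∀ x : Fin 6, x < i → (f x) ∈ {v | ∃ j, j < i' ∧ e j = v} := by
    intro x hx
    exact ⟨Fin.cast hc.symm x, hx, rfl⟩
  let wa : {v | ∃ j, j < i' ∧ e j = v} := ⟨f a, mS a hai⟩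
  let wb : {v | ∃ j, j < i' ∧ e j = v} := ⟨f b, mS b hbi⟩
  let wc : {v | ∃ j, j < i' ∧ e j = v} := ⟨f c, mS c hci⟩
  have hwa : wa ∈ {w : {v | ∃ j, j < i' ∧ e j = v} | K33MinusEdgeᶜ.Adj (e i') ↑w} :=
    (adjB_iff (f i) (f a)).mpr H1
  have hwb : wb ∈ {w : {v | ∃ j, j < i' ∧ e j = v} | K33MinusEdgeᶜ.Adj (e i') ↑w} :=
    (adjB_iff (f i) (f b)).mpr H2
  have hwc : wc ∉ {w : {v | ∃ j, j < i' ∧ e j = v} | K33MinusEdgeᶜ.Adj (e i') ↑w} := by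
    intro hA
    have : adjB (f i) (f c) = true := (adjB_iff (f i) (f c)).mp hA
    rw [H3] at this
    exact Bool.false_ne_true this
  have HH : K33MinusEdgeᶜ.Adj (f a) (f c) ↔ K33MinusEdgeᶜ.Adj (f b) (f c) :=
    H wa hwa wb hwb wc hwc
  have : adjB (f b) (f c) = true :=
    (adjB_iff (f b) (f c)).mp (HH.mp ((adjB_iff (f a) (f c)).mpr H4))
  rw [H5] at this
  exact Bool.false_ne_true this
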